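/- For any $\alpha \in \mathbb{R}^k$ and positive definite $\Omega \in \mathbb{R}^{k \times k}$, the function $f(z) = 2\,\phi_k(z; \Omega)\,\Phi(\alpha^\top z)$ integrates to 1 over $\mathbb{R}^k$, where $\phi_k(\cdot;\Omega)$ is the mean-zero multivariate normal density with covariance $\Omega$ and $\Phi$ is the standard normal CDF. -/

import Mathlib

open MeasureTheory Real Set Matrix

/-- Standard normal density. -/
noncomputable def stdNormalPdf (x : ℝ) : ℝ :=
  (Real.sqrt (2 * Real.pi))⁻¹ * Real.exp (-x ^ 2 / 2)

/-- Standard normal cumulative distribution function. -/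
noncomputable def stdNormalCdf (x : ℝ) : ℝ := ∫ t in Iic x, stdNormalPdf t

/-- Mean-zero multivariate normal density with covariance matrix `Ω`. -/
noncomputable def mvnPdf {k : ℕ} (Ω : Matrix (Fin k) (Fin k) ℝ) (z : Fin k → ℝ) : ℝ :=
  (Real.sqrt ((2 * Real.pi) ^ k * Ω.det))⁻¹ * Real.exp (-(z ⬝ᵥ (Ω⁻¹ *ᵥ z)) / 2)


lemma stdNormalPdf_eq : stdNormalPdf = ProbabilityTheory.gaussianPDFReal 0 1 := by
  ext x
  simp only [stdNormalPdf, ProbabilityTheory.gaussianPDFReal]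
  norm_num

lemma stdNormalPdf_nonneg (x : ℝ) : 0 ≤ stdNormalPdf x := by
  rw [stdNormalPdf_eq]; exact ProbabilityTheory.gaussianPDFReal_nonneg 0 1 x

lemma integrable_stdNormalPdf : Integrable stdNormalPdf := by
  rw [stdNormalPdf_eq]; exact ProbabilityTheory.integrable_gaussianPDFReal 0 1

lemma integral_stdNormalPdf : ∫ x, stdNormalPdf x = 1 := by
  rw [stdNormalPdf_eq]; exact ProbabilityTheory.integral_gaussianPDFReal_eq_one 0 one_ne_zero

lemma stdNormalCdf_add_neg (x : ℝ) : stdNormalCdf x + stdNormalCdf (-x) = 1 := by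
  have h1 : stdNormalCdf (-x) = ∫ t in Ioi x, stdNormalPdf t := by
    rw [stdNormalCdf, ← integral_comp_neg_Ioi]
    congr 1; ext t; simp [stdNormalPdf]
  rw [stdNormalCdf, h1, ← compl_Iic, integral_add_compl measurableSet_Iic integrable_stdNormalPdf,
    integral_stdNormalPdf]

lemma stdNormalCdf_nonneg (x : ℝ) : 0 ≤ stdNormalCdf x :=
  setIntegral_nonneg measurableSet_Iic fun t _ => stdNormalPdf_nonneg t

lemma stdNormalCdf_le_one (x : ℝ) : stdNormalCdf x ≤ 1 := by
  rw [← integral_stdNormalPdf]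
  exact setIntegral_le_integral integrable_stdNormalPdf
    (Filter.Eventually.of_forall fun t => stdNormalPdf_nonneg t)

lemma stdNormalCdf_mono : Monotone stdNormalCdf := fun a b hab =>
  setIntegral_mono_set integrable_stdNormalPdf.integrableOn
    (Filter.Eventually.of_forall fun t => stdNormalPdf_nonneg t)
    (HasSubset.Subset.eventuallyLE (Iic_subset_Iic.mpr hab))

lemma measurable_stdNormalCdf : Measurable stdNormalCdf := stdNormalCdf_mono.measurable

lemma integral_comp_mulVec {k : ℕ} (B : Matrix (Fin k) (Fin k) ℝ) (hdet : B.det ≠ 0)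
    (g : (Fin k → ℝ) → ℝ) (hg : AEStronglyMeasurable g volume) :
    ∫ z, g (B *ᵥ z) = |B.det|⁻¹ * ∫ y, g y := by
  have hmap := Real.map_matrix_volume_pi_eq_smul_volume_pi hdet
  have hmeas : Measurable (Matrix.toLin' B) :=
    (Matrix.toLin' B).continuous_of_finiteDimensional.measurable
  have hg' : AEStronglyMeasurable g (Measure.map (Matrix.toLin' B) volume) := by
    rw [hmap]
    exact hg.mono_ac (Measure.smul_absolutelyContinuous)
  have h1 : ∫ y, g y ∂(Measure.map (Matrix.toLin' B) volume) = ∫ z, g (B *ᵥ z) := by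
    rw [integral_map hmeas.aemeasurable hg']
    simp [Matrix.toLin'_apply]
  rw [hmap, integral_smul_measure] at h1
  rw [← h1, ENNReal.toReal_ofReal (by positivity), smul_eq_mul, abs_inv]

lemma dot_half_eq {k : ℕ} (y : Fin k → ℝ) :
    Real.exp (-(y ⬝ᵥ y) / 2) = ∏ i, Real.exp (-(1/2) * (y i) ^ 2) := by
  rw [← Real.exp_sum]
  congr 1
  simp only [dotProduct, neg_div, Finset.sum_div, ← Finset.sum_neg_distrib]
  exact Finset.sum_congr rfl fun i _ => by ring

lemma integrable_gauss_pi {k : ℕ} :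
    Integrable (fun y : Fin k → ℝ => Real.exp (-(y ⬝ᵥ y) / 2)) := by
  simp only [dot_half_eq]
  exact Integrable.fintype_prod (fun _ => integrable_exp_neg_mul_sq (by norm_num))

lemma integral_gauss_pi {k : ℕ} :
    ∫ y : Fin k → ℝ, Real.exp (-(y ⬝ᵥ y) / 2) = Real.sqrt (2 * Real.pi) ^ k := by
  simp only [dot_half_eq]
  rw [volume_pi, integral_fintype_prod_eq_pow (fun x : ℝ => Real.exp (-(1/2) * x ^ 2)),
    integral_gaussian]
  rw [show (Real.pi / (1/2)) = 2 * Real.pi by ring, Fintype.card_fin]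


open scoped MatrixOrder in
noncomputable def Matrix.PosSemidef.sqrt {n : Type*} [Fintype n] [DecidableEq n]
    {A : Matrix n n ℝ} (_ : A.PosSemidef) : Matrix n n ℝ := CFC.sqrt A

open scoped MatrixOrder in
lemma Matrix.PosSemidef.sqrt_mul_self {n : Type*} [Fintype n] [DecidableEq n]
    {A : Matrix n n ℝ} (hA : A.PosSemidef) : hA.sqrt * hA.sqrt = A :=
  CFC.sqrt_mul_sqrt_self A (Matrix.nonneg_iff_posSemidef.mpr hA)

open scoped MatrixOrder in
lemma Matrix.PosSemidef.posSemidef_sqrt {n : Type*} [Fintype n] [DecidableEq n]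
    {A : Matrix n n ℝ} (hA : A.PosSemidef) : hA.sqrt.PosSemidef :=
  Matrix.nonneg_iff_posSemidef.mp (CFC.sqrt_nonneg A)

variable {k : ℕ} {Ω : Matrix (Fin k) (Fin k) ℝ}

lemma quad_eq (hΩ : Ω.PosDef) (z : Fin k → ℝ) :
    z ⬝ᵥ (Ω⁻¹ *ᵥ z) = (hΩ.inv.posSemidef.sqrt *ᵥ z) ⬝ᵥ (hΩ.inv.posSemidef.sqrt *ᵥ z) := by
  set B := hΩ.inv.posSemidef.sqrt with hB
  have hBB : B * B = Ω⁻¹ := hΩ.inv.posSemidef.sqrt_mul_self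
  have hsym : Bᵀ = B := by
    have := hΩ.inv.posSemidef.posSemidef_sqrt.1
    simpa [Matrix.IsHermitian, Matrix.conjTranspose_eq_transpose_of_trivial] using this
  rw [← hBB, ← Matrix.mulVec_mulVec, Matrix.dotProduct_mulVec (A := B),
    ← Matrix.mulVec_transpose, hsym]

lemma det_sqrt_inv (hΩ : Ω.PosDef) : hΩ.inv.posSemidef.sqrt.det = (Real.sqrt Ω.det)⁻¹ := by
  set B := hΩ.inv.posSemidef.sqrt with hB
  have hBB : B * B = Ω⁻¹ := hΩ.inv.posSemidef.sqrt_mul_self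
  have hd2 : B.det ^ 2 = (Ω.det)⁻¹ := by
    rw [pow_two, ← Matrix.det_mul, hBB, Matrix.det_nonsing_inv, Ring.inverse_eq_inv]
  have hsq := hΩ.inv.posSemidef.posSemidef_sqrt
  have hnn : 0 ≤ B.det := by
    rw [hsq.1.det_eq_prod_eigenvalues]
    simpa using Finset.prod_nonneg fun i (_ : i ∈ Finset.univ) => hsq.eigenvalues_nonneg i
  have : B.det = Real.sqrt ((Ω.det)⁻¹) := by
    rw [← hd2, Real.sqrt_sq_eq_abs, abs_of_nonneg hnn]
  rw [this, Real.sqrt_inv]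

lemma integral_mvnPdf (hΩ : Ω.PosDef) : ∫ z : Fin k → ℝ, mvnPdf Ω z = 1 := by
  set B := hΩ.inv.posSemidef.sqrt with hB
  have hdet : B.det ≠ 0 := by
    rw [det_sqrt_inv hΩ]
    have := hΩ.det_pos
    positivity
  have habs : |B.det|⁻¹ = Real.sqrt Ω.det := by
    rw [det_sqrt_inv hΩ, abs_inv, inv_inv, abs_of_nonneg (Real.sqrt_nonneg _)]
  have : ∀ z : Fin k → ℝ, mvnPdf Ω z
      = (Real.sqrt ((2 * Real.pi) ^ k * Ω.det))⁻¹
        * Real.exp (-((B *ᵥ z) ⬝ᵥ (B *ᵥ z)) / 2) := by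
    intro z; rw [mvnPdf, quad_eq hΩ]
  simp only [this]
  have key : ∫ a : Fin k → ℝ, Real.exp (-(B *ᵥ a ⬝ᵥ B *ᵥ a) / 2)
      = |B.det|⁻¹ * ∫ y : Fin k → ℝ, Real.exp (-(y ⬝ᵥ y) / 2) :=
    integral_comp_mulVec B hdet (fun y => Real.exp (-(y ⬝ᵥ y) / 2))
      (Continuous.aestronglyMeasurable (by continuity))
  rw [integral_const_mul, key, integral_gauss_pi, habs]
  rw [Real.sqrt_mul (by positivity)]
  have h2 : Real.sqrt ((2 * Real.pi) ^ k) = Real.sqrt (2 * Real.pi) ^ k := by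
    rw [show ((2:ℝ) * Real.pi) ^ k = (Real.sqrt (2 * Real.pi) ^ 2) ^ k by
        rw [Real.sq_sqrt (by positivity)], ← pow_mul, mul_comm 2 k, pow_mul,
      Real.sqrt_sq (by positivity)]
  rw [h2]
  have hπ : (0:ℝ) < Real.sqrt (2 * Real.pi) := Real.sqrt_pos.mpr (by positivity)
  have hdΩ : (0:ℝ) < Real.sqrt Ω.det := Real.sqrt_pos.mpr hΩ.det_pos
  field_simp

lemma integrable_mvnPdf (hΩ : Ω.PosDef) : Integrable (mvnPdf Ω) := by
  set B := hΩ.inv.posSemidef.sqrt with hB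
  have hmap := Real.map_matrix_volume_pi_eq_smul_volume_pi (M := B) (by
    rw [det_sqrt_inv hΩ]
    have := hΩ.det_pos
    positivity)
  have hmeas : Measurable (Matrix.toLin' B) :=
    (Matrix.toLin' B).continuous_of_finiteDimensional.measurable
  have hg : AEStronglyMeasurable (fun y : Fin k → ℝ => Real.exp (-(y ⬝ᵥ y) / 2))
      (Measure.map (Matrix.toLin' B) volume) :=
    Continuous.aestronglyMeasurable (by continuity)
  have h1 : Integrable (fun y : Fin k → ℝ => Real.exp (-(y ⬝ᵥ y) / 2))
      (Measure.map (Matrix.toLin' B) volume) := by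
    rw [hmap]
    exact integrable_gauss_pi.smul_measure ENNReal.ofReal_ne_top
  have h2 := (integrable_map_measure hg hmeas.aemeasurable).mp h1
  have h3 : Integrable (fun z : Fin k → ℝ => Real.exp (-(B *ᵥ z ⬝ᵥ B *ᵥ z) / 2)) := by
    simpa [Function.comp_def, Matrix.toLin'_apply] using h2
  have : mvnPdf Ω = fun z => (Real.sqrt ((2 * Real.pi) ^ k * Ω.det))⁻¹
      * Real.exp (-(B *ᵥ z ⬝ᵥ B *ᵥ z) / 2) := by
    funext z; rw [mvnPdf, quad_eq hΩ]
  rw [this]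
  exact h3.const_mul _

lemma mvnPdf_neg (Ω : Matrix (Fin k) (Fin k) ℝ) (z : Fin k → ℝ) :
    mvnPdf Ω (-z) = mvnPdf Ω z := by
  simp [mvnPdf, Matrix.mulVec_neg, dotProduct_neg, neg_dotProduct]

lemma mvnPdf_nonneg (Ω : Matrix (Fin k) (Fin k) ℝ) (z : Fin k → ℝ) : 0 ≤ mvnPdf Ω z := by
  unfold mvnPdf; positivity

/-- The multivariate skew-normal density `2 φ_k(z; Ω) Φ(αᵀ z)` integrates to 1. -/
theorem mv_skewNormal_integrates_to_one {k : ℕ}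
    (Ω : Matrix (Fin k) (Fin k) ℝ) (hΩ : Ω.PosDef) (α : Fin k → ℝ) :
    ∫ z : Fin k → ℝ, 2 * mvnPdf Ω z * stdNormalCdf (α ⬝ᵥ z) = 1 := by
  have hcont : Continuous fun z : Fin k → ℝ => α ⬝ᵥ z := by
    simp only [dotProduct]
    continuity
  have hmeas1 : AEStronglyMeasurable (fun z : Fin k → ℝ => stdNormalCdf (α ⬝ᵥ z)) volume :=
    (measurable_stdNormalCdf.comp hcont.measurable).aestronglyMeasurable
  have hmeas2 : AEStronglyMeasurable (fun z : Fin k → ℝ => stdNormalCdf (-(α ⬝ᵥ z))) volume :=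
    (measurable_stdNormalCdf.comp hcont.measurable.neg).aestronglyMeasurable
  have hbd : ∀ x : ℝ, ‖stdNormalCdf x‖ ≤ 1 := fun x => by
    rw [Real.norm_eq_abs, abs_of_nonneg (stdNormalCdf_nonneg x)]
    exact stdNormalCdf_le_one x
  have hint0 : Integrable (fun z : Fin k → ℝ => 2 * mvnPdf Ω z) :=
    (integrable_mvnPdf hΩ).const_mul 2
  have hint1 : Integrable (fun z : Fin k → ℝ => 2 * mvnPdf Ω z * stdNormalCdf (α ⬝ᵥ z)) := by
    have := hint0.bdd_mul hmeas1 (c := 1) (Filter.Eventually.of_forall fun z => hbd _)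
    simpa [mul_comm] using this
  have hint2 : Integrable (fun z : Fin k → ℝ => 2 * mvnPdf Ω z * stdNormalCdf (-(α ⬝ᵥ z))) := by
    have := hint0.bdd_mul hmeas2 (c := 1) (Filter.Eventually.of_forall fun z => hbd _)
    simpa [mul_comm] using this
  set I := ∫ z : Fin k → ℝ, 2 * mvnPdf Ω z * stdNormalCdf (α ⬝ᵥ z) with hI
  have hflip : ∫ z : Fin k → ℝ, 2 * mvnPdf Ω z * stdNormalCdf (-(α ⬝ᵥ z)) = I := by
    rw [hI, ← integral_neg_eq_self (fun z : Fin k → ℝ => 2 * mvnPdf Ω z * stdNormalCdf (α ⬝ᵥ z))]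
    congr 1
    funext z
    rw [mvnPdf_neg, dotProduct_neg]
  have hsum : I + I = 2 := by
    nth_rewrite 2 [← hflip]
    rw [hI, ← integral_add hint1 hint2]
    have : (fun z : Fin k → ℝ => 2 * mvnPdf Ω z * stdNormalCdf (α ⬝ᵥ z)
        + 2 * mvnPdf Ω z * stdNormalCdf (-(α ⬝ᵥ z))) = fun z => 2 * mvnPdf Ω z := by
      funext z
      rw [← mul_add, stdNormalCdf_add_neg, mul_one]
    rw [this, integral_const_mul, integral_mvnPdf hΩ, mul_one]
  linarith
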